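/- For any snr₁ ≥ snr₂ > 0, P > 0, and α ∈ [0,1], lim_{W→∞} W·log(1 + α·snr₁·P/(2W)) = α·snr₁·P/2 and lim_{W→∞} W·log(1 + (1−α)·snr₂·P/(αsnr₁P + 2W)) = (1−α)·snr₂·P/2, and hence the limiting rate pairs (R₁,R₂) = (α·snr₁·P/2, (1−α)·snr₂·P/2) for α ∈ [0,1] trace exactly the set {(R₁,R₂) ∈ ℝ₊² : R₁/snr₁ + R₂/snr₂ ≤ P/2} as their lower-left closure (i.e., the set of pairs dominated coordinatewise by some such limit point equals this region). -/

import Mathlib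

open Filter Real

private lemma aux_tendsto (c b : ℝ) :
    Tendsto (fun W : ℝ => W * Real.log (1 + c / (b + 2 * W))) atTop (nhds (c / 2)) := by
  have hx : Tendsto (fun W : ℝ => b + 2 * W) atTop atTop :=
    tendsto_atTop_add_const_left _ b
      ((tendsto_id.const_mul_atTop (by norm_num : (0:ℝ) < 2)))
  have h1 : Tendsto (fun W : ℝ => (b + 2 * W) * Real.log (1 + c / (b + 2 * W)))
      atTop (nhds c) := (Real.tendsto_mul_log_one_add_div_atTop c).comp hx
  have h2 : Tendsto (fun W : ℝ => Real.log (1 + c / (b + 2 * W))) atTop (nhds 0) := by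
    have : Tendsto (fun W : ℝ => 1 + c / (b + 2 * W)) atTop (nhds 1) := by
      have := hx.const_div_atTop c
      simpa using tendsto_const_nhds.add this
    have := (Real.continuousAt_log (by norm_num : (1:ℝ) ≠ 0)).tendsto.comp this
    simpa [Function.comp_def] using this
  have key : Tendsto (fun W : ℝ =>
      (1/2) * ((b + 2 * W) * Real.log (1 + c / (b + 2 * W)))
        - (b/2) * Real.log (1 + c / (b + 2 * W))) atTop (nhds ((1/2) * c - (b/2) * 0)) :=
    (h1.const_mul _).sub (h2.const_mul _)
  have heq : ∀ W : ℝ, (1/2) * ((b + 2 * W) * Real.log (1 + c / (b + 2 * W)))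
        - (b/2) * Real.log (1 + c / (b + 2 * W))
      = W * Real.log (1 + c / (b + 2 * W)) := by intro W; ring
  have hval : (1/2) * c - (b/2) * 0 = c / 2 := by ring
  rw [hval] at key
  exact key.congr heq

theorem bc_superposition_infinite_bandwidth (snr₁ snr₂ P : ℝ)
    (hsnr : snr₁ ≥ snr₂) (hsnr₂ : 0 < snr₂) (hP : 0 < P) :
    (∀ α : ℝ, α ∈ Set.Icc (0:ℝ) 1 →
      Tendsto (fun W : ℝ => W * Real.log (1 + α * snr₁ * P / (2 * W)))
        atTop (nhds (α * snr₁ * P / 2)) ∧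
      Tendsto (fun W : ℝ =>
          W * Real.log (1 + (1 - α) * snr₂ * P / (α * snr₁ * P + 2 * W)))
        atTop (nhds ((1 - α) * snr₂ * P / 2))) ∧
    {p : ℝ × ℝ | 0 ≤ p.1 ∧ 0 ≤ p.2 ∧
        ∃ α ∈ Set.Icc (0:ℝ) 1,
          p.1 ≤ α * snr₁ * P / 2 ∧ p.2 ≤ (1 - α) * snr₂ * P / 2} =
      {p : ℝ × ℝ | 0 ≤ p.1 ∧ 0 ≤ p.2 ∧ p.1 / snr₁ + p.2 / snr₂ ≤ P / 2} := by
  have hsnr₁ : 0 < snr₁ := lt_of_lt_of_le hsnr₂ hsnr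
  constructor
  · intro α hα
    constructor
    · simpa using aux_tendsto (α * snr₁ * P) 0
    · exact aux_tendsto ((1 - α) * snr₂ * P) (α * snr₁ * P)
  · ext p
    simp only [Set.mem_setOf_eq]
    constructor
    · rintro ⟨h1, h2, α, ⟨hα0, hα1⟩, hR1, hR2⟩
      refine ⟨h1, h2, ?_⟩
      have e1 : p.1 / snr₁ ≤ α * P / 2 := by
        rw [div_le_iff₀ hsnr₁] at *
        nlinarith
      have e2 : p.2 / snr₂ ≤ (1 - α) * P / 2 := by
        rw [div_le_iff₀ hsnr₂] at *
        nlinarith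
      linarith
    · rintro ⟨h1, h2, hsum⟩
      refine ⟨h1, h2, 2 * p.1 / (snr₁ * P), ⟨?_, ?_⟩, ?_, ?_⟩
      · positivity
      · rw [div_le_one (by positivity)]
        have : p.2 / snr₂ ≥ 0 := by positivity
        have h3 : p.1 / snr₁ ≤ P / 2 := by linarith
        rw [div_le_div_iff₀ hsnr₁ (by norm_num)] at h3
        linarith
      · have heq : 2 * p.1 / (snr₁ * P) * snr₁ * P / 2 = p.1 := by
          field_simp
        rw [heq]
      · have h4 : p.2 / snr₂ ≤ P / 2 - p.1 / snr₁ := by linarith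
        rw [div_le_iff₀ hsnr₂] at h4
        have : (1 - 2 * p.1 / (snr₁ * P)) * snr₂ * P / 2
            = (P / 2 - p.1 / snr₁) * snr₂ := by field_simp
        rw [this]; exact h4
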